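/- For complex numbers a, b, the operator norm of the 2×2 matrix [[a, b],[0, a]] equals |b|/2 + sqrt(|b|²/4 + |a|²). -/

import Mathlib

set_option synthInstance.maxHeartbeats 400000
set_option maxHeartbeats 1000000

private lemma jordan_apply_norm (a b : ℂ) (x : Fin 2 → ℂ) :
    ‖Matrix.toEuclideanCLM (𝕜 := ℂ) (n := Fin 2) !![a, b; 0, a] ((WithLp.equiv 2 _).symm x)‖
      = Real.sqrt (‖a * x 0 + b * x 1‖ ^ 2 + ‖a * x 1‖ ^ 2) := by
  have h : Matrix.toEuclideanCLM (𝕜 := ℂ) (n := Fin 2) !![a, b; 0, a] ((WithLp.equiv 2 _).symm x)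
      = (WithLp.equiv 2 _).symm ![a * x 0 + b * x 1, a * x 1] := by
    simp only [WithLp.equiv_symm_apply, Matrix.toEuclideanCLM_toLp]
    congr 1
    simp [Matrix.mulVec, Matrix.cons_mulVec, dotProduct]
  rw [h, EuclideanSpace.norm_eq]
  simp [Fin.sum_univ_two]

theorem norm_jordan_block (a b : ℂ) :
    ‖Matrix.toEuclideanCLM (𝕜 := ℂ) (n := Fin 2) !![a, b; 0, a]‖
      = ‖b‖ / 2 + Real.sqrt ((‖b‖)^2 / 4 + (‖a‖)^2) := by
  rcases eq_or_ne b 0 with hb | hb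
  · subst hb
    have h : !![a, 0; 0, a] = a • (1 : Matrix (Fin 2) (Fin 2) ℂ) := by
      ext i j; fin_cases i <;> fin_cases j <;> simp [Matrix.one_apply]
    rw [h, map_smul, map_one]
    rw [norm_smul a (1 : EuclideanSpace ℂ (Fin 2) →L[ℂ] EuclideanSpace ℂ (Fin 2)), norm_one]
    simp [Real.sqrt_sq (norm_nonneg a)]
  · set α := ‖a‖ with hαdef
    set β := ‖b‖ with hβdef
    set t := Real.sqrt (β ^ 2 / 4 + α ^ 2) with htdef
    set r := β / 2 + t with hrdef
    have hα : 0 ≤ α := norm_nonneg a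
    have hβ : 0 < β := by simpa [hβdef] using norm_pos_iff.mpr hb
    have ht2 : t ^ 2 = β ^ 2 / 4 + α ^ 2 := Real.sq_sqrt (by positivity)
    have ht : β / 2 ≤ t := by
      rw [htdef]
      calc β / 2 = Real.sqrt ((β / 2) ^ 2) := (Real.sqrt_sq (by positivity)).symm
        _ ≤ Real.sqrt (β ^ 2 / 4 + α ^ 2) := by
            apply Real.sqrt_le_sqrt; nlinarith
    have hr : 0 < r := by rw [hrdef]; nlinarith
    have key : r * (r - β) = α ^ 2 := by rw [hrdef]; nlinarith [ht2]
    change _ = r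
    apply le_antisymm
    · -- upper bound
      apply ContinuousLinearMap.opNorm_le_bound _ hr.le
      intro v
      obtain ⟨x, rfl⟩ : ∃ x : Fin 2 → ℂ, (WithLp.equiv 2 (Fin 2 → ℂ)).symm x = v :=
        ⟨WithLp.equiv 2 _ v, by simp⟩
      rw [jordan_apply_norm, EuclideanSpace.norm_eq]
      simp only [Fin.sum_univ_two]
      set p := ‖x 0‖ with hp
      set q := ‖x 1‖ with hq
      have hp0 : 0 ≤ p := norm_nonneg _
      have hq0 : 0 ≤ q := norm_nonneg _
      have h1 : ‖a * x 0 + b * x 1‖ ≤ α * p + β * q := by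
        calc ‖a * x 0 + b * x 1‖ ≤ ‖a * x 0‖ + ‖b * x 1‖ :=
              norm_add_le _ _
          _ = α * p + β * q := by rw [norm_mul, norm_mul]
      have h2 : ‖a * x 1‖ = α * q := norm_mul _ _
      have hquad : (α * p + β * q) ^ 2 + (α * q) ^ 2 ≤ r ^ 2 * (p ^ 2 + q ^ 2) := by
        have hid : r * (r ^ 2 * (p ^ 2 + q ^ 2)) - r * ((α * p + β * q) ^ 2 + (α * q) ^ 2)
            = β * (r * p - α * q) ^ 2
              + (r * p ^ 2 + r * q ^ 2 + β * q ^ 2) * (r * (r - β) - α ^ 2) := by ring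
        rw [key, sub_self, mul_zero, add_zero] at hid
        have hnn : 0 ≤ β * (r * p - α * q) ^ 2 :=
          mul_nonneg hβ.le (sq_nonneg (r * p - α * q))
        have hmul : r * ((α * p + β * q) ^ 2 + (α * q) ^ 2)
            ≤ r * (r ^ 2 * (p ^ 2 + q ^ 2)) := by linarith
        exact le_of_mul_le_mul_left hmul hr
      have hle : ‖a * x 0 + b * x 1‖ ^ 2 + ‖a * x 1‖ ^ 2
          ≤ r ^ 2 * (p ^ 2 + q ^ 2) := by
        rw [h2]
        have : ‖a * x 0 + b * x 1‖ ^ 2 ≤ (α * p + β * q) ^ 2 := by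
          apply sq_le_sq' _ h1
          nlinarith [norm_nonneg (a * x 0 + b * x 1)]
        linarith
      calc Real.sqrt (‖a * x 0 + b * x 1‖ ^ 2 + ‖a * x 1‖ ^ 2)
          ≤ Real.sqrt (r ^ 2 * (p ^ 2 + q ^ 2)) := Real.sqrt_le_sqrt hle
        _ = r * Real.sqrt (‖x 0‖ ^ 2 + ‖x 1‖ ^ 2) := by
            rw [Real.sqrt_mul (sq_nonneg r), Real.sqrt_sq hr.le]
    · -- lower bound
      set x0 : ℂ := (starRingEnd ℂ) a * b * (((β⁻¹ : ℝ)) : ℂ) * (((r⁻¹ : ℝ)) : ℂ) with hx0def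
      set v : EuclideanSpace ℂ (Fin 2) := (WithLp.equiv 2 (Fin 2 → ℂ)).symm ![x0, 1] with hvdef
      have hβr : (0:ℝ) < β * r := mul_pos hβ hr
      have habs0 : ‖x0‖ = α / r := by
        rw [hx0def, norm_mul, norm_mul, norm_mul, Complex.norm_conj, Complex.norm_real,
          Complex.norm_real, Real.norm_eq_abs, Real.norm_eq_abs, abs_of_pos (inv_pos.mpr hβ), abs_of_pos (inv_pos.mpr hr)]
        field_simp
        rw [hαdef, hβdef]; ring
      have hcomp1 : a * x0 + b * 1 = (((α ^ 2 * (β * r)⁻¹ + 1 : ℝ)) : ℂ) * b := by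
        rw [hx0def]
        have hconj : a * (starRingEnd ℂ) a = ((α : ℝ) : ℂ) ^ 2 := by
          rw [Complex.mul_conj]
          norm_cast
          rw [Complex.normSq_eq_norm_sq, hαdef]
        push_cast
        rw [mul_one]
        linear_combination (b * (((β : ℝ) : ℂ))⁻¹ * (((r : ℝ) : ℂ))⁻¹) * hconj
      have habs1 : ‖a * x0 + b * 1‖ = r := by
        rw [hcomp1, norm_mul, Complex.norm_real, Real.norm_eq_abs, ← hβdef,
          abs_of_pos (by positivity)]
        have : α ^ 2 = r * (r - β) := key.symm
        field_simp
        nlinarith [key]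
      have habs2 : ‖a * 1‖ = α := by simp [hαdef]
      have hTv : ‖Matrix.toEuclideanCLM (𝕜 := ℂ) (n := Fin 2) !![a, b; 0, a] v‖
          = Real.sqrt (r ^ 2 + α ^ 2) := by
        rw [hvdef, jordan_apply_norm]
        simp only [Matrix.cons_val_zero, Matrix.cons_val_one, Matrix.head_cons]
        rw [habs1, habs2]
      have hv : ‖v‖ = Real.sqrt ((α / r) ^ 2 + 1) := by
        rw [hvdef, EuclideanSpace.norm_eq]
        simp only [Fin.sum_univ_two, WithLp.equiv_symm_apply, PiLp.toLp_apply, Matrix.cons_val_zero,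
          Matrix.cons_val_one, Matrix.head_cons]
        rw [habs0]
        norm_num
      have hrel : Real.sqrt (r ^ 2 + α ^ 2) = r * Real.sqrt ((α / r) ^ 2 + 1) := by
        rw [← Real.sqrt_sq hr.le, ← Real.sqrt_mul (sq_nonneg r)]
        rw [Real.sqrt_sq hr.le]
        congr 1
        field_simp
        ring
      have hvpos : 0 < Real.sqrt ((α / r) ^ 2 + 1) := by
        apply Real.sqrt_pos.mpr
        positivity
      have hle := (Matrix.toEuclideanCLM (𝕜 := ℂ) (n := Fin 2) !![a, b; 0, a]).le_opNorm v
      rw [hTv, hrel, hv] at hle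
      exact le_of_mul_le_mul_right hle hvpos
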